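/- For every n ≥ 1, the identity F_n(12/3; q,r,s,t) = r^{C(n,2)} s^{C(n,2)} + ∑_{m=1}^{n-1} ∑_{i=1}^{m} q^{(n-m)(m-i)} r^{C(m,2) + (n-m)(i-1)} s^{C(m,2)} t^{m-i} holds in ℤ[q,r,s,t]. -/

import Mathlib

open Finset

/-- `IsRGF w` : `w = a₁⋯aₙ` is a restricted growth function: all letters are
positive, the first letter is `1` and each later letter is at most one more
than the maximum of the preceding prefix. -/
def IsRGF (w : List ℕ) : Prop :=
  (∀ a ∈ w, 1 ≤ a) ∧
  (0 < w.length → w.getD 0 0 = 1) ∧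
  (∀ j : ℕ, j + 1 < w.length →
    w.getD (j + 1) 0 ≤ 1 + (w.take (j + 1)).foldr max 0)

/-- The set partition encoded by the word `w` contains the set-partition
pattern encoded by the word `p`:  there are positions, listed increasingly,
whose "same block" (= same letter) pattern in `w` is exactly that of `p`. -/
def ContainsPat (w p : List ℕ) : Prop :=
  ∃ f : Fin p.length → Fin w.length, StrictMono f ∧
    ∀ a b : Fin p.length, (w.get (f a) = w.get (f b) ↔ p.get a = p.get b)

/-- `Rn n p` : the restricted growth functions of length `n` whose associated
set partition avoids the pattern (of set partitions) encoded by the RGF `p`.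
Via the standard bijection `σ ↦ w(σ)` this is `R_n(π) ≅ Π_n(π)`.
Patterns of `[3]`:  `1/2/3 ↦ [1,2,3]`, `1/23 ↦ [1,2,2]`, `13/2 ↦ [1,2,1]`,
`12/3 ↦ [1,1,2]`, `123 ↦ [1,1,1]`. -/
def Rn (n : ℕ) (p : List ℕ) : Set (List ℕ) :=
  {w | w.length = n ∧ IsRGF w ∧ ¬ ContainsPat w p}

/-- `lb` : sum over positions `j` of the number of distinct values occurring
before position `j` that are bigger than the letter at `j`. -/
def statLB (w : List ℕ) : ℕ :=
  ∑ j ∈ Finset.range w.length,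
    ((w.take j).toFinset.filter (fun v => w.getD j 0 < v)).card

/-- `ls` : left and smaller. -/
def statLS (w : List ℕ) : ℕ :=
  ∑ j ∈ Finset.range w.length,
    ((w.take j).toFinset.filter (fun v => v < w.getD j 0)).card

/-- `rb` : right and bigger. -/
def statRB (w : List ℕ) : ℕ :=
  ∑ j ∈ Finset.range w.length,
    ((w.drop (j + 1)).toFinset.filter (fun v => w.getD j 0 < v)).card

/-- `rs` : right and smaller. -/
def statRS (w : List ℕ) : ℕ :=
  ∑ j ∈ Finset.range w.length,
    ((w.drop (j + 1)).toFinset.filter (fun v => v < w.getD j 0)).card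

/-- The four–variable generating function
`F_n(π;q,r,s,t) = ∑_{σ∈Π_n(π)} q^{lb} r^{ls} s^{rb} t^{rs}`, with
`q = X 0`, `r = X 1`, `s = X 2`, `t = X 3`. -/
noncomputable def Fgen (n : ℕ) (p : List ℕ) : MvPolynomial (Fin 4) ℤ :=
  ∑ᶠ w ∈ Rn n p,
    (MvPolynomial.X 0 : MvPolynomial (Fin 4) ℤ) ^ statLB w *
      MvPolynomial.X 1 ^ statLS w *
      MvPolynomial.X 2 ^ statRB w *
      MvPolynomial.X 3 ^ statRS w

/-- `LB_n(π;q)`. -/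
noncomputable def LBp (n : ℕ) (p : List ℕ) : Polynomial ℤ :=
  ∑ᶠ w ∈ Rn n p, Polynomial.X ^ statLB w

/-- `LS_n(π;q)`. -/
noncomputable def LSp (n : ℕ) (p : List ℕ) : Polynomial ℤ :=
  ∑ᶠ w ∈ Rn n p, Polynomial.X ^ statLS w

/-- `RB_n(π;q)`. -/
noncomputable def RBp (n : ℕ) (p : List ℕ) : Polynomial ℤ :=
  ∑ᶠ w ∈ Rn n p, Polynomial.X ^ statRB w

/-- `RS_n(π;q)`. -/
noncomputable def RSp (n : ℕ) (p : List ℕ) : Polynomial ℤ :=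
  ∑ᶠ w ∈ Rn n p, Polynomial.X ^ statRS w
def Wrd (m i t : ℕ) : List ℕ := (List.range m).map (· + 1) ++ List.replicate t i

lemma Wrd_length (m i t : ℕ) : (Wrd m i t).length = m + t := by
  simp [Wrd]

lemma Wrd_getD {m t j : ℕ} (i : ℕ) (hj : j < m + t) :
    (Wrd m i t).getD j 0 = if j < m then j + 1 else i := by
  unfold Wrd
  rcases lt_or_ge j m with h | h
  · rw [List.getD_append _ _ _ _ (by simpa using h), if_pos h,
      List.getD_eq_getElem _ _ (by simpa using h)]
    simp
  · rw [List.getD_append_right _ _ _ _ (by simpa using h), if_neg (by omega),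
      List.getD_eq_getElem _ _ (by simp; omega)]
    simp

lemma mem_take_Wrd_le {m i t j x : ℕ} (hj : j ≤ m) :
    x ∈ (Wrd m i t).take j ↔ 1 ≤ x ∧ x ≤ j := by
  rw [List.mem_take_iff_getElem]
  constructor
  · rintro ⟨k, hk, rfl⟩
    rw [Wrd_length] at hk
    have hk' : k < m + t := by omega
    have := Wrd_getD (m := m) (t := t) i hk'
    rw [← List.getD_eq_getElem _ 0 (by rw [Wrd_length]; omega), this, if_pos (by omega)]
    omega
  · rintro ⟨h1, h2⟩
    refine ⟨x - 1, by rw [Wrd_length]; omega, ?_⟩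
    rw [← List.getD_eq_getElem _ 0 (by rw [Wrd_length]; omega),
      Wrd_getD i (by omega), if_pos (by omega)]
    omega

lemma mem_take_Wrd_ge {m i t j x : ℕ} (hi : 1 ≤ i) (him : i ≤ m) (hj : m ≤ j) :
    x ∈ (Wrd m i t).take j ↔ 1 ≤ x ∧ x ≤ m := by
  rw [List.mem_take_iff_getElem]
  constructor
  · rintro ⟨k, hk, rfl⟩
    rw [Wrd_length] at hk
    have hk' : k < m + t := by omega
    rw [← List.getD_eq_getElem _ 0 (by rw [Wrd_length]; omega), Wrd_getD i hk']
    split <;> omega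
  · rintro ⟨h1, h2⟩
    refine ⟨x - 1, by rw [Wrd_length]; omega, ?_⟩
    rw [← List.getD_eq_getElem _ 0 (by rw [Wrd_length]; omega),
      Wrd_getD i (by omega), if_pos (by omega)]
    omega

lemma mem_drop_Wrd_le {m i t k x : ℕ} (ht : 1 ≤ t) (hk : k ≤ m) :
    x ∈ (Wrd m i t).drop k ↔ (k + 1 ≤ x ∧ x ≤ m) ∨ x = i := by
  rw [List.mem_drop_iff_getElem]
  constructor
  · rintro ⟨j, hj, rfl⟩
    rw [Wrd_length] at hj
    rw [← List.getD_eq_getElem _ 0 (by rw [Wrd_length]; omega), Wrd_getD i (by omega)]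
    split <;> omega
  · rintro (⟨h1, h2⟩ | h)
    · refine ⟨x - 1 - k, by rw [Wrd_length]; omega, ?_⟩
      rw [← List.getD_eq_getElem _ 0 (by rw [Wrd_length]; omega),
        Wrd_getD i (by omega), if_pos (by omega)]
      omega
    · refine ⟨m - k, by rw [Wrd_length]; omega, ?_⟩
      rw [← List.getD_eq_getElem _ 0 (by rw [Wrd_length]; omega),
        Wrd_getD i (by omega), if_neg (by omega)]
      omega

lemma mem_drop_Wrd_ge {m i t k x : ℕ} (hk : m ≤ k) :
    x ∈ (Wrd m i t).drop k ↔ (k < m + t ∧ x = i) := by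
  rw [List.mem_drop_iff_getElem]
  constructor
  · rintro ⟨j, hj, rfl⟩
    rw [Wrd_length] at hj
    rw [← List.getD_eq_getElem _ 0 (by rw [Wrd_length]; omega), Wrd_getD i (by omega),
      if_neg (by omega)]
    omega
  · rintro ⟨h1, h⟩
    refine ⟨0, by rw [Wrd_length]; omega, ?_⟩
    rw [← List.getD_eq_getElem _ 0 (by rw [Wrd_length]; omega),
      Wrd_getD i (by omega), if_neg (by omega)]
    omega

lemma mem_drop_Wrd_zero {m i k x : ℕ} (hk : k ≤ m) :
    x ∈ (Wrd m i 0).drop k ↔ (k + 1 ≤ x ∧ x ≤ m) := by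
  rw [List.mem_drop_iff_getElem]
  constructor
  · rintro ⟨j, hj, rfl⟩
    rw [Wrd_length] at hj
    rw [← List.getD_eq_getElem _ 0 (by rw [Wrd_length]; omega),
      Wrd_getD i (by omega), if_pos (by omega)]
    omega
  · rintro ⟨h1, h2⟩
    refine ⟨x - 1 - k, by rw [Wrd_length]; omega, ?_⟩
    rw [← List.getD_eq_getElem _ 0 (by rw [Wrd_length]; omega),
      Wrd_getD i (by omega), if_pos (by omega)]
    omega

lemma sum_range_id_choose (n : ℕ) : ∑ j ∈ Finset.range n, j = n.choose 2 := by
  rw [Nat.choose_two_right, ← Finset.sum_range_id_mul_two n]; omega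

lemma statLB_Wrd {m i : ℕ} (t : ℕ) (hi : 1 ≤ i) (him : i ≤ m) :
    statLB (Wrd m i t) = t * (m - i) := by
  unfold statLB
  rw [Wrd_length, Finset.range_eq_Ico,
    ← Finset.sum_Ico_consecutive _ (Nat.zero_le m) (Nat.le_add_right m t)]
  have h1 : ∀ j ∈ Finset.Ico 0 m,
      (((Wrd m i t).take j).toFinset.filter (fun v => (Wrd m i t).getD j 0 < v)).card = 0 := by
    intro j hj
    simp only [Finset.mem_Ico] at hj
    rw [Finset.card_eq_zero, Finset.filter_eq_empty_iff]
    intro x hx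
    rw [List.mem_toFinset, mem_take_Wrd_le (by omega)] at hx
    rw [Wrd_getD i (by omega), if_pos (by omega)]
    omega
  have h2 : ∀ j ∈ Finset.Ico m (m + t),
      (((Wrd m i t).take j).toFinset.filter (fun v => (Wrd m i t).getD j 0 < v)).card
        = m - i := by
    intro j hj
    simp only [Finset.mem_Ico] at hj
    have : ((Wrd m i t).take j).toFinset.filter (fun v => (Wrd m i t).getD j 0 < v)
        = Finset.Icc (i + 1) m := by
      ext x
      rw [Finset.mem_filter, List.mem_toFinset, mem_take_Wrd_ge hi him (by omega),
        Wrd_getD i (by omega), if_neg (by omega), Finset.mem_Icc]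
      omega
    rw [this, Nat.card_Icc]
    omega
  rw [Finset.sum_congr rfl h1, Finset.sum_congr rfl h2, Finset.sum_const, Finset.sum_const,
    Nat.card_Ico, Nat.card_Ico, smul_eq_mul, smul_eq_mul, Nat.add_sub_cancel_left]
  omega

lemma statLS_Wrd {m i : ℕ} (t : ℕ) (hi : 1 ≤ i) (him : i ≤ m) :
    statLS (Wrd m i t) = m.choose 2 + t * (i - 1) := by
  unfold statLS
  rw [Wrd_length, Finset.range_eq_Ico,
    ← Finset.sum_Ico_consecutive _ (Nat.zero_le m) (Nat.le_add_right m t)]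
  have h1 : ∀ j ∈ Finset.Ico 0 m,
      (((Wrd m i t).take j).toFinset.filter (fun v => v < (Wrd m i t).getD j 0)).card = j := by
    intro j hj
    simp only [Finset.mem_Ico] at hj
    have : ((Wrd m i t).take j).toFinset.filter (fun v => v < (Wrd m i t).getD j 0)
        = Finset.Icc 1 j := by
      ext x
      rw [Finset.mem_filter, List.mem_toFinset, mem_take_Wrd_le (by omega),
        Wrd_getD i (by omega), if_pos (by omega), Finset.mem_Icc]
      omega
    rw [this, Nat.card_Icc]
    omega
  have h2 : ∀ j ∈ Finset.Ico m (m + t),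
      (((Wrd m i t).take j).toFinset.filter (fun v => v < (Wrd m i t).getD j 0)).card
        = i - 1 := by
    intro j hj
    simp only [Finset.mem_Ico] at hj
    have : ((Wrd m i t).take j).toFinset.filter (fun v => v < (Wrd m i t).getD j 0)
        = Finset.Icc 1 (i - 1) := by
      ext x
      rw [Finset.mem_filter, List.mem_toFinset, mem_take_Wrd_ge hi him (by omega),
        Wrd_getD i (by omega), if_neg (by omega), Finset.mem_Icc]
      omega
    rw [this, Nat.card_Icc]
    omega
  rw [Finset.sum_congr rfl h1, Finset.sum_congr rfl h2, Finset.sum_const, Nat.card_Ico,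
    smul_eq_mul, ← Finset.range_eq_Ico, sum_range_id_choose, Nat.add_sub_cancel_left]

lemma sum_rev (m : ℕ) : ∑ j ∈ Finset.range m, (m - 1 - j) = m.choose 2 := by
  rw [← sum_range_id_choose m]
  exact Finset.sum_range_reflect (fun j => j) m

lemma statRB_Wrd {m i t : ℕ} (hi : 1 ≤ i) (him : i ≤ m) (ht : 1 ≤ t) :
    statRB (Wrd m i t) = m.choose 2 := by
  unfold statRB
  rw [Wrd_length, Finset.range_eq_Ico,
    ← Finset.sum_Ico_consecutive _ (Nat.zero_le m) (Nat.le_add_right m t)]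
  have h1 : ∀ j ∈ Finset.Ico 0 m,
      (((Wrd m i t).drop (j + 1)).toFinset.filter (fun v => (Wrd m i t).getD j 0 < v)).card
        = m - 1 - j := by
    intro j hj
    simp only [Finset.mem_Ico] at hj
    have : ((Wrd m i t).drop (j + 1)).toFinset.filter (fun v => (Wrd m i t).getD j 0 < v)
        = Finset.Icc (j + 2) m := by
      ext x
      rw [Finset.mem_filter, List.mem_toFinset, mem_drop_Wrd_le ht (by omega),
        Wrd_getD i (by omega), if_pos (by omega), Finset.mem_Icc]
      omega
    rw [this, Nat.card_Icc]
    omega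
  have h2 : ∀ j ∈ Finset.Ico m (m + t),
      (((Wrd m i t).drop (j + 1)).toFinset.filter (fun v => (Wrd m i t).getD j 0 < v)).card
        = 0 := by
    intro j hj
    simp only [Finset.mem_Ico] at hj
    rw [Finset.card_eq_zero, Finset.filter_eq_empty_iff]
    intro x hx
    rw [List.mem_toFinset, mem_drop_Wrd_ge (by omega)] at hx
    rw [Wrd_getD i (by omega), if_neg (by omega)]
    omega
  rw [Finset.sum_congr rfl h1, Finset.sum_congr rfl h2, Finset.sum_const, smul_zero, add_zero,
    ← Finset.range_eq_Ico, sum_rev]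

lemma statRS_Wrd {m i t : ℕ} (hi : 1 ≤ i) (him : i ≤ m) (ht : 1 ≤ t) :
    statRS (Wrd m i t) = m - i := by
  unfold statRS
  rw [Wrd_length, Finset.range_eq_Ico,
    ← Finset.sum_Ico_consecutive _ (Nat.zero_le m) (Nat.le_add_right m t)]
  have h1 : ∀ j ∈ Finset.Ico 0 m,
      (((Wrd m i t).drop (j + 1)).toFinset.filter (fun v => v < (Wrd m i t).getD j 0)).card
        = if i ≤ j then 1 else 0 := by
    intro j hj
    simp only [Finset.mem_Ico] at hj
    rcases le_or_gt i j with h | h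
    · have : ((Wrd m i t).drop (j + 1)).toFinset.filter (fun v => v < (Wrd m i t).getD j 0)
          = {i} := by
        ext x
        rw [Finset.mem_filter, List.mem_toFinset, mem_drop_Wrd_le ht (by omega),
          Wrd_getD i (by omega), if_pos (by omega), Finset.mem_singleton]
        omega
      rw [this, if_pos h, Finset.card_singleton]
    · rw [if_neg (by omega), Finset.card_eq_zero, Finset.filter_eq_empty_iff]
      intro x hx
      rw [List.mem_toFinset, mem_drop_Wrd_le ht (by omega)] at hx
      rw [Wrd_getD i (by omega), if_pos (by omega)]
      omega
  have h2 : ∀ j ∈ Finset.Ico m (m + t),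
      (((Wrd m i t).drop (j + 1)).toFinset.filter (fun v => v < (Wrd m i t).getD j 0)).card
        = 0 := by
    intro j hj
    simp only [Finset.mem_Ico] at hj
    rw [Finset.card_eq_zero, Finset.filter_eq_empty_iff]
    intro x hx
    rw [List.mem_toFinset, mem_drop_Wrd_ge (by omega)] at hx
    rw [Wrd_getD i (by omega), if_neg (by omega)]
    omega
  have h3 : (Finset.Ico 0 m).filter (fun j => i ≤ j) = Finset.Ico i m := by
    ext x
    simp only [Finset.mem_filter, Finset.mem_Ico]
    omega
  rw [Finset.sum_congr rfl h1, Finset.sum_congr rfl h2, Finset.sum_const, smul_zero, add_zero]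
  rw [Finset.sum_boole, h3, Nat.card_Ico, Nat.cast_id]

lemma statRB_Wrd_zero {m i : ℕ} : statRB (Wrd m i 0) = m.choose 2 := by
  unfold statRB
  rw [Wrd_length, Nat.add_zero]
  have h1 : ∀ j ∈ Finset.range m,
      (((Wrd m i 0).drop (j + 1)).toFinset.filter (fun v => (Wrd m i 0).getD j 0 < v)).card
        = m - 1 - j := by
    intro j hj
    simp only [Finset.mem_range] at hj
    have : ((Wrd m i 0).drop (j + 1)).toFinset.filter (fun v => (Wrd m i 0).getD j 0 < v)
        = Finset.Icc (j + 2) m := by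
      ext x
      rw [Finset.mem_filter, List.mem_toFinset, mem_drop_Wrd_zero (by omega),
        Wrd_getD i (by omega), if_pos (by omega), Finset.mem_Icc]
      omega
    rw [this, Nat.card_Icc]
    omega
  rw [Finset.sum_congr rfl h1, sum_rev]

lemma statRS_Wrd_zero {m i : ℕ} : statRS (Wrd m i 0) = 0 := by
  unfold statRS
  rw [Wrd_length, Nat.add_zero]
  apply Finset.sum_eq_zero
  intro j hj
  simp only [Finset.mem_range] at hj
  rw [Finset.card_eq_zero, Finset.filter_eq_empty_iff]
  intro x hx
  rw [List.mem_toFinset, mem_drop_Wrd_zero (by omega)] at hx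
  rw [Wrd_getD i (by omega), if_pos (by omega)]
  omega



lemma le_foldr_max {x : ℕ} {l : List ℕ} (hx : x ∈ l) : x ≤ l.foldr max 0 := by
  induction l with
  | nil => simp at hx
  | cons a l ih =>
    rcases List.mem_cons.mp hx with rfl | h
    · exact le_max_left _ _
    · exact le_trans (ih h) (le_max_right _ _)

lemma getD_mem_take {w : List ℕ} {k j : ℕ} (hk : k < j) (hj : j ≤ w.length) :
    w.getD k 0 ∈ w.take j := by
  have hkl : k < w.length := lt_of_lt_of_le hk hj
  have h1 : k < (w.take j).length := by
    rw [List.length_take]; omega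
  have : (w.take j)[k] = w[k] := List.getElem_take ..
  rw [List.getD_eq_getElem _ _ hkl, ← this]
  exact List.getElem_mem h1

lemma isRGF_Wrd {m i : ℕ} (t : ℕ) (hi : 1 ≤ i) (him : i ≤ m) : IsRGF (Wrd m i t) := by
  refine ⟨?_, ?_, ?_⟩
  · intro a ha
    rcases List.mem_append.mp ha with h | h
    · simp only [List.mem_map, List.mem_range] at h
      omega
    · rw [List.mem_replicate] at h
      omega
  · intro h
    rw [Wrd_length] at h
    rw [Wrd_getD i (by omega), if_pos (by omega)]
  · intro j hj
    rw [Wrd_length] at hj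
    have hjm : j < m + t := by omega
    -- the value at position j is in take (j+1)
    have hmem : (Wrd m i t).getD j 0 ∈ (Wrd m i t).take (j + 1) :=
      getD_mem_take (Nat.lt_succ_self j) (by rw [Wrd_length]; omega)
    have hle := le_foldr_max hmem
    rw [Wrd_getD i hjm] at hle
    rw [Wrd_getD i (by omega)]
    rcases lt_or_ge (j + 1) m with h | h
    · rw [if_pos h]
      rw [if_pos (by omega)] at hle
      omega
    · rw [if_neg (by omega)]
      -- value i; need i ≤ 1 + max. max ≥ value at position min (m-1) j
      have hmem2 : (Wrd m i t).getD (m - 1) 0 ∈ (Wrd m i t).take (j + 1) :=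
        getD_mem_take (by omega) (by rw [Wrd_length]; omega)
      have hle2 := le_foldr_max hmem2
      rw [Wrd_getD i (by omega), if_pos (by omega)] at hle2
      omega

lemma not_contains_Wrd {m i t : ℕ} : ¬ ContainsPat (Wrd m i t) [1, 1, 2] := by
  rintro ⟨f, hmono, hiff⟩
  have l01 : (f ⟨0, by decide⟩ : ℕ) < (f ⟨1, by decide⟩ : ℕ) := hmono (by decide)
  have l12 : (f ⟨1, by decide⟩ : ℕ) < (f ⟨2, by decide⟩ : ℕ) := hmono (by decide)
  have hlen : ∀ a : Fin ([1, 1, 2] : List ℕ).length, ((f a : ℕ)) < m + t := by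
    intro a
    have h2 := (f a).2
    have h3 := Wrd_length m i t
    omega
  have hget : ∀ a : Fin ([1, 1, 2] : List ℕ).length,
      (Wrd m i t).get (f a) = (Wrd m i t).getD (f a : ℕ) 0 := by
    intro a
    rw [List.getD_eq_getElem _ _ (f a).2]
    rfl
  have h01 : (Wrd m i t).get (f ⟨0, by decide⟩) = (Wrd m i t).get (f ⟨1, by decide⟩) :=
    (hiff _ _).mpr rfl
  have h12 : (Wrd m i t).get (f ⟨1, by decide⟩) ≠ (Wrd m i t).get (f ⟨2, by decide⟩) := by
    intro h
    have h2 := (hiff ⟨1, by decide⟩ ⟨2, by decide⟩).mp h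
    exact absurd h2 (by decide)
  have hf1 : m ≤ (f ⟨1, by decide⟩ : ℕ) := by
    by_contra h
    push_neg at h
    rw [hget ⟨0, by decide⟩, hget ⟨1, by decide⟩, Wrd_getD i (hlen _), Wrd_getD i (hlen _),
      if_pos (by omega), if_pos (by omega)] at h01
    omega
  apply h12
  rw [hget ⟨1, by decide⟩, hget ⟨2, by decide⟩, Wrd_getD i (hlen _), Wrd_getD i (hlen _),
    if_neg (by omega), if_neg (by omega)]

lemma foldr_max_le {c : ℕ} {l : List ℕ} (h : ∀ x ∈ l, x ≤ c) : l.foldr max 0 ≤ c := by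
  induction l with
  | nil => simp
  | cons a l ih =>
    simp only [List.foldr_cons, max_le_iff]
    exact ⟨h a (by simp), ih fun x hx => h x (by simp [hx])⟩

lemma rgf_prefix {w : List ℕ} (hw : IsRGF w) (k : ℕ) (hk : k ≤ w.length)
    (hnd : ∀ a b : ℕ, a < b → b < k → w.getD a 0 ≠ w.getD b 0) :
    ∀ j, j < k → w.getD j 0 = j + 1 := by
  intro j
  induction j using Nat.strong_induction_on with
  | _ j ih =>
    intro hj
    rcases Nat.eq_zero_or_pos j with rfl | hj0
    · exact hw.2.1 (by omega)
    · obtain ⟨j', rfl⟩ : ∃ j', j = j' + 1 := ⟨j - 1, by omega⟩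
      have hmax : (w.take (j' + 1)).foldr max 0 = j' + 1 := by
        apply le_antisymm
        · apply foldr_max_le
          intro x hx
          rw [List.mem_take_iff_getElem] at hx
          obtain ⟨idx, hidx, rfl⟩ := hx
          rw [← List.getD_eq_getElem _ 0 (by omega), ih idx (by omega) (by omega)]
          omega
        · have hmem : w.getD j' 0 ∈ w.take (j' + 1) :=
            getD_mem_take (Nat.lt_succ_self j') (by omega)
          have := le_foldr_max hmem
          rwa [ih j' (by omega) (by omega)] at this
      have hgrow := hw.2.2 j' (by omega)
      rw [hmax] at hgrow
      have hpos : 1 ≤ w.getD (j' + 1) 0 := by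
        apply hw.1
        rw [List.getD_eq_getElem _ _ (by omega : j' + 1 < w.length)]
        exact List.getElem_mem _
      have hne : ∀ a, a < j' + 1 → w.getD a 0 ≠ w.getD (j' + 1) 0 :=
        fun a ha => hnd a _ ha hj
      by_contra hne2
      have hv : w.getD (j' + 1) 0 ≤ j' + 1 := by omega
      have hcon := hne (w.getD (j' + 1) 0 - 1) (by omega)
      rw [ih (w.getD (j' + 1) 0 - 1) (by omega) (by omega)] at hcon
      omega

lemma contains_of_three {w : List ℕ} {a b c : ℕ} (hab : a < b) (hbc : b < c)
    (hc : c < w.length)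
    (h1 : w[a]'(by omega) = w[b]'(by omega))
    (h2 : w[b]'(by omega) ≠ w[c]'(by omega)) : ContainsPat w [1, 1, 2] := by
  have ha : a < w.length := by omega
  have hb : b < w.length := by omega
  have h3 : w[a]'ha ≠ w[c]'hc := by rw [h1]; exact h2
  refine ⟨fun x => ⟨if (x : ℕ) = 0 then a else if (x : ℕ) = 1 then b else c, ?_⟩, ?_, ?_⟩
  · fin_cases x <;> simp <;> omega
  · intro x y hxy
    fin_cases x <;> fin_cases y <;> simp at hxy ⊢ <;> omega
  · intro x y
    have h2' : w[c]'hc ≠ w[b]'hb := fun h => h2 h.symm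
    have h3' : w[c]'hc ≠ w[a]'ha := fun h => h3 h.symm
    fin_cases x <;> fin_cases y <;> simp [h1, h2, h3, h2', h3']

set_option maxHeartbeats 1000000 in
lemma char_Rn {n : ℕ} (hn : 1 ≤ n) {w : List ℕ} (hw : w ∈ Rn n [1, 1, 2]) :
    w = Wrd n 1 0 ∨ ∃ m i, 1 ≤ m ∧ m ≤ n - 1 ∧ 1 ≤ i ∧ i ≤ m ∧ w = Wrd m i (n - m) := by
  obtain ⟨hlen, hrgf, hav⟩ := hw
  have hg : ∀ (k : ℕ) (hk : k < w.length), w.get ⟨k, hk⟩ = w.getD k 0 :=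
    fun k hk => (List.getD_eq_getElem w 0 hk).symm
  have hg' : ∀ (k : ℕ) (hk : k < w.length), w[k] = w.getD k 0 :=
    fun k hk => (List.getD_eq_getElem w 0 hk).symm
  by_cases hnd : ∀ a b : ℕ, a < b → b < n → w.getD a 0 ≠ w.getD b 0
  · left
    have hall := rgf_prefix hrgf n (le_of_eq hlen.symm) hnd
    apply List.ext_getElem (by rw [Wrd_length]; omega)
    intro j h1 h2
    rw [Wrd_length] at h2
    rw [← List.getD_eq_getElem _ 0 h1, ← List.getD_eq_getElem _ 0 (by rw [Wrd_length]; omega),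
      hall j (by omega), Wrd_getD 1 (by omega), if_pos (by omega)]
  · right
    push_neg at hnd
    have hP : ∃ b, b < n ∧ ∃ a, a < b ∧ w.getD a 0 = w.getD b 0 := by
      obtain ⟨a, b, hab, hbn, heq⟩ := hnd
      exact ⟨b, hbn, a, hab, heq⟩
    classical
    obtain ⟨b0, hspec, hmin⟩ :
        ∃ b, (b < n ∧ ∃ a, a < b ∧ w.getD a 0 = w.getD b 0) ∧
          ∀ b' < b, ¬(b' < n ∧ ∃ a, a < b' ∧ w.getD a 0 = w.getD b' 0) :=
      ⟨Nat.find hP, Nat.find_spec hP, fun _ h => Nat.find_min hP h⟩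
    obtain ⟨hb0n, a, hab0, heq⟩ := hspec
    have hnd' : ∀ a' b' : ℕ, a' < b' → b' < b0 → w.getD a' 0 ≠ w.getD b' 0 := by
      intro a' b' h1 h2 h3
      exact hmin b' h2 ⟨by omega, a', h1, h3⟩
    have hpre : ∀ j, j < b0 → w.getD j 0 = j + 1 :=
      rgf_prefix hrgf b0 (by omega) hnd'
    have hwa : w.getD a 0 = a + 1 := hpre a hab0
    have htail : ∀ j, b0 ≤ j → j < n → w.getD j 0 = w.getD b0 0 := by
      intro j hj1 hj2
      rcases eq_or_lt_of_le hj1 with rfl | hj3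
      · rfl
      by_contra hne
      apply hav
      apply contains_of_three hab0 hj3 (by omega)
      · rw [hg', hg']; exact heq
      · rw [hg', hg']; intro h; exact hne h.symm
    refine ⟨b0, a + 1, by omega, by omega, by omega, by omega, ?_⟩
    apply List.ext_getElem (by rw [Wrd_length]; omega)
    intro j h1 h2
    rw [Wrd_length] at h2
    rw [← List.getD_eq_getElem _ 0 h1, ← List.getD_eq_getElem _ 0 (by rw [Wrd_length]; omega),
      Wrd_getD _ (by omega)]
    rcases lt_or_ge j b0 with h | h
    · rw [if_pos h, hpre j h]
    · rw [if_neg (by omega), htail j h (by omega), heq.symm, hwa]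

def Fs (n : ℕ) : Finset (List ℕ) :=
  insert (Wrd n 1 0)
    (((Finset.Icc 1 (n - 1)).sigma fun m => Finset.Icc 1 m).image fun p =>
      Wrd p.1 p.2 (n - p.1))

lemma Rn_eq (n : ℕ) (hn : 1 ≤ n) : Rn n [1, 1, 2] = ↑(Fs n) := by
  ext w
  constructor
  · intro hw
    rcases char_Rn hn hw with h | ⟨m, i, hm1, hm2, hi1, hi2, h⟩
    · simp only [Fs, Finset.coe_insert, Set.mem_insert_iff]
      exact Or.inl h
    · simp only [Fs, Finset.coe_insert, Set.mem_insert_iff, Finset.coe_image,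
        Set.mem_image, Finset.mem_coe, Finset.mem_sigma, Finset.mem_Icc]
      exact Or.inr ⟨⟨m, i⟩, ⟨⟨hm1, hm2⟩, ⟨hi1, hi2⟩⟩, h.symm⟩
  · intro hw
    simp only [Fs, Finset.coe_insert, Set.mem_insert_iff, Finset.coe_image,
      Set.mem_image, Finset.mem_coe, Finset.mem_sigma, Finset.mem_Icc] at hw
    rcases hw with rfl | ⟨⟨m, i⟩, ⟨⟨hm1, hm2⟩, ⟨hi1, hi2⟩⟩, rfl⟩
    · exact ⟨by simp [Wrd_length], isRGF_Wrd 0 le_rfl hn, not_contains_Wrd⟩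
    · exact ⟨by rw [Wrd_length]; omega, isRGF_Wrd (n - m) hi1 hi2, not_contains_Wrd⟩

lemma Wrd_ne {n m i : ℕ} (hm : m < n) (hi : i ≤ m) : Wrd m i (n - m) ≠ Wrd n 1 0 := by
  intro h
  have h1 : (Wrd m i (n - m)).getD m 0 = i := by
    rw [Wrd_getD i (by omega), if_neg (by omega)]
  have h2 : (Wrd n 1 0).getD m 0 = m + 1 := by
    rw [Wrd_getD 1 (by omega), if_pos (by omega)]
  rw [h] at h1
  omega


open MvPolynomial in
/-- the four-variable generating function for `12/3`. -/
theorem stmt13 (n : ℕ) (hn : 1 ≤ n) :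
    Fgen n [1, 1, 2] =
      (X 1 : MvPolynomial (Fin 4) ℤ) ^ n.choose 2 * X 2 ^ n.choose 2 +
        ∑ m ∈ Finset.Icc 1 (n - 1), ∑ i ∈ Finset.Icc 1 m,
          (X 0 : MvPolynomial (Fin 4) ℤ) ^ ((n - m) * (m - i)) *
            X 1 ^ (m.choose 2 + (n - m) * (i - 1)) *
            X 2 ^ m.choose 2 * X 3 ^ (m - i) := by
  unfold Fgen
  rw [Rn_eq n hn, finsum_mem_coe_finset]
  unfold Fs
  have hnot : Wrd n 1 0 ∉
      ((Finset.Icc 1 (n - 1)).sigma fun m => Finset.Icc 1 m).image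
        (fun p => Wrd p.1 p.2 (n - p.1)) := by
    intro h
    obtain ⟨⟨m, i⟩, hmem, heq⟩ := Finset.mem_image.mp h
    simp only [Finset.mem_sigma, Finset.mem_Icc] at hmem
    dsimp only at hmem heq
    exact Wrd_ne (by omega) (by omega) heq
  rw [Finset.sum_insert hnot]
  have hinj : ∀ p ∈ (Finset.Icc 1 (n - 1)).sigma fun m => Finset.Icc 1 m,
      ∀ q ∈ (Finset.Icc 1 (n - 1)).sigma fun m => Finset.Icc 1 m,
      Wrd p.1 p.2 (n - p.1) = Wrd q.1 q.2 (n - q.1) → p = q := by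
    rintro ⟨m, i⟩ hp ⟨m', i'⟩ hq h
    simp only [Finset.mem_sigma, Finset.mem_Icc] at hp hq
    dsimp only at hp hq h
    have hmm : m = m' := by
      by_contra hne
      rcases lt_or_gt_of_ne hne with hlt | hlt
      · have h1 : (Wrd m i (n - m)).getD m 0 = i := by
          rw [Wrd_getD i (by omega), if_neg (by omega)]
        have h2 : (Wrd m' i' (n - m')).getD m 0 = m + 1 := by
          rw [Wrd_getD i' (by omega), if_pos (by omega)]
        rw [h] at h1
        omega
      · have h1 : (Wrd m' i' (n - m')).getD m' 0 = i' := by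
          rw [Wrd_getD i' (by omega), if_neg (by omega)]
        have h2 : (Wrd m i (n - m)).getD m' 0 = m' + 1 := by
          rw [Wrd_getD i (by omega), if_pos (by omega)]
        rw [← h] at h1
        omega
    subst hmm
    have hii : i = i' := by
      have h1 : (Wrd m i (n - m)).getD m 0 = i := by
        rw [Wrd_getD i (by omega), if_neg (by omega)]
      have h2 : (Wrd m i' (n - m)).getD m 0 = i' := by
        rw [Wrd_getD i' (by omega), if_neg (by omega)]
      rw [h, h2] at h1
      omega
    rw [hii]
  rw [Finset.sum_image hinj, Finset.sum_sigma]
  refine congrArg₂ (· + ·) ?_ ?_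
  · rw [statLB_Wrd 0 le_rfl hn, statLS_Wrd 0 le_rfl hn, statRB_Wrd_zero, statRS_Wrd_zero]
    simp [Nat.choose_two_right]
  · apply Finset.sum_congr rfl
    intro m hm
    apply Finset.sum_congr rfl
    intro i hi
    simp only [Finset.mem_Icc] at hm hi
    dsimp only
    rw [statLB_Wrd (n - m) hi.1 hi.2, statLS_Wrd (n - m) hi.1 hi.2,
      statRB_Wrd hi.1 hi.2 (by omega), statRS_Wrd hi.1 hi.2 (by omega)]
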